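/- Let N and r be positive integers, let B_1, …, B_r ∈ ℝ^N, let L be the convex hull of {B_1, …, B_r}, let B ∈ L, let m be a positive integer, and let c > 0 be a real number. Then there exists δ > 0 such that for every linear functional ℓ : ℝ^N → ℝ satisfying ℓ(B_j) ∈ (1/m)ℤ and ℓ(B_j) ≥ −c for all j, and every point Δ ∈ L with ‖Δ − B‖ < δ, the following holds: if ℓ(Δ) ≤ 0, then ℓ(B) ≤ 0. Here ‖·‖ denotes the Euclidean norm on ℝ^N. -/

import Mathlib

open Finset Filter Topology

private lemma rep_of_mem_hull {E : Type*} [AddCommGroup E] [Module ℝ E] {r : ℕ}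
    (B : Fin r → E) {x : E} (hx : x ∈ convexHull ℝ (Set.range B)) :
    ∃ w : Fin r → ℝ, w ∈ stdSimplex ℝ (Fin r) ∧ ∑ j, w j • B j = x := by
  rw [convexHull_range_eq_exists_affineCombination] at hx
  obtain ⟨s, w, hw0, hw1, hwx⟩ := hx
  refine ⟨fun j => if j ∈ s then w j else 0, ⟨fun j => ?_, ?_⟩, ?_⟩
  · dsimp only; split
    · exact hw0 _ ‹_›
    · exact le_refl 0
  · rw [Finset.sum_ite_mem, Finset.univ_inter, hw1]
  · rw [← hwx, affineCombination_eq_linear_combination s B w hw1]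
    simp only [ite_smul, zero_smul, Finset.sum_ite_mem, Finset.univ_inter]

private lemma lattice_lower_bound {r m : ℕ} (hm : 0 < m) {c : ℝ} (hc : 0 < c)
    (t : Fin r → ℝ) (ht : t ∈ stdSimplex ℝ (Fin r)) :
    ∃ ε : ℝ, 0 < ε ∧ ε ≤ 1 ∧ ∀ v : Fin r → ℝ,
      (∀ j, (∃ n : ℤ, v j = (n : ℝ) / m) ∧ -c ≤ v j) →
      0 < ∑ j, t j * v j → ε ≤ ∑ j, t j * v j := by
  obtain ⟨ht0, ht1⟩ := ht
  have hm' : (0 : ℝ) < m := by exact_mod_cast hm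
  -- support of t is nonempty
  have hS : (Finset.univ.filter fun j => 0 < t j).Nonempty := by
    by_contra h
    rw [Finset.not_nonempty_iff_eq_empty, Finset.filter_eq_empty_iff] at h
    have : ∑ j, t j = 0 := Finset.sum_eq_zero fun j _ =>
      le_antisymm (not_lt.mp (h (Finset.mem_univ j))) (ht0 j)
    rw [ht1] at this; norm_num at this
  set S := Finset.univ.filter fun j => 0 < t j with hSdef
  set T := S.inf' hS t with hTdef
  have hT : 0 < T := by
    rw [hTdef, Finset.lt_inf'_iff]
    intro j hj
    exact (Finset.mem_filter.mp hj).2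
  set K := (c + 1) / T with hKdef
  have hK : 0 < K := by positivity
  set lo : ℤ := ⌈-(c * m)⌉ with hlo
  set hi : ℤ := ⌊K * m⌋ with hhi
  set Ibox : Finset (Fin r → ℤ) := Fintype.piFinset fun _ => Finset.Icc lo hi with hIbox
  set G : Finset ℝ := Ibox.image fun n => ∑ j, t j * ((n j : ℝ) / m) with hG
  set P : Finset ℝ := G.filter fun x => 0 < x with hP
  refine ⟨if h : P.Nonempty then min (P.min' h) 1 else 1, ?_, ?_, ?_⟩
  · split
    · rename_i h
      exact lt_min (Finset.mem_filter.mp (P.min'_mem h)).2 one_pos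
    · norm_num
  · split
    · exact min_le_right _ _
    · exact le_refl 1
  · intro v hv hpos
    by_cases hbig : ∃ j, 0 < t j ∧ K < v j
    · obtain ⟨j₀, hj₀t, hj₀v⟩ := hbig
      have h1 : ∑ j, t j * v j
          = t j₀ * v j₀ + ∑ j ∈ Finset.univ.erase j₀, t j * v j := by
        rw [← Finset.add_sum_erase _ _ (Finset.mem_univ j₀)]
      have h2 : T ≤ t j₀ := Finset.inf'_le _ (by simp [hSdef, hj₀t])
      have hTK : T * K = c + 1 := by
        rw [hKdef]; field_simp
      have h3 : c + 1 ≤ t j₀ * v j₀ := by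
        rw [← hTK]
        exact mul_le_mul h2 hj₀v.le hK.le (ht0 j₀)
      have h4 : -c ≤ ∑ j ∈ Finset.univ.erase j₀, t j * v j := by
        have step : ∀ j ∈ Finset.univ.erase j₀, t j * (-c) ≤ t j * v j := fun j _ =>
          mul_le_mul_of_nonneg_left (hv j).2 (ht0 j)
        have h5 : ∑ j ∈ Finset.univ.erase j₀, t j * (-c)
            ≤ ∑ j ∈ Finset.univ.erase j₀, t j * v j := Finset.sum_le_sum step
        have h6 : ∑ j ∈ Finset.univ.erase j₀, t j * (-c)
            = (∑ j ∈ Finset.univ.erase j₀, t j) * (-c) := by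
          rw [Finset.sum_mul]
        have h7 : ∑ j ∈ Finset.univ.erase j₀, t j ≤ 1 := by
          rw [← ht1]
          exact Finset.sum_le_sum_of_subset_of_nonneg (Finset.subset_univ _)
            fun j _ _ => ht0 j
        have h8 : 0 ≤ ∑ j ∈ Finset.univ.erase j₀, t j :=
          Finset.sum_nonneg fun j _ => ht0 j
        nlinarith
      have hε1 : (if h : P.Nonempty then min (P.min' h) 1 else 1 : ℝ) ≤ 1 := by
        split
        · exact min_le_right _ _
        · exact le_refl 1
      linarith
    · push_neg at hbig
      choose nn hnn using fun j => (hv j).1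
      set n' : Fin r → ℤ := fun j => if 0 < t j then nn j else 0 with hn'
      have hmem : n' ∈ Ibox := by
        rw [hIbox, Fintype.mem_piFinset]
        intro j
        rw [Finset.mem_Icc]
        by_cases h : 0 < t j
        · have hvj1 := (hv j).2
          have hvj2 := hbig j h
          rw [hnn j] at hvj1 hvj2
          constructor
          · simp only [hn', if_pos h]
            rw [hlo, Int.ceil_le]
            rw [le_div_iff₀ hm'] at hvj1
            push_cast
            linarith
          · simp only [hn', if_pos h]
            rw [hhi, Int.le_floor]
            rw [div_le_iff₀ hm'] at hvj2
            exact hvj2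
        · simp only [hn', if_neg h]
          constructor
          · rw [hlo, Int.ceil_le]
            push_cast
            nlinarith
          · rw [hhi, Int.le_floor]
            push_cast
            positivity
      have heq : ∑ j, t j * v j = ∑ j, t j * ((n' j : ℝ) / m) := by
        refine Finset.sum_congr rfl fun j _ => ?_
        by_cases h : 0 < t j
        · simp only [hn', if_pos h, hnn j]
        · have : t j = 0 := le_antisymm (not_lt.mp h) (ht0 j)
          simp [this]
      have hGmem : ∑ j, t j * v j ∈ P := by
        refine Finset.mem_filter.mpr ⟨Finset.mem_image.mpr ⟨n', hmem, heq.symm⟩, hpos⟩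
      have hPne : P.Nonempty := ⟨_, hGmem⟩
      rw [dif_pos hPne]
      exact le_trans (min_le_left _ _) (P.min'_le _ hGmem)

/-- Given `B₁, …, B_r ∈ ℝ^N`, their convex hull `L`, a point `b ∈ L`, a
positive integer `m` and a real `c > 0`, there is `δ > 0` such that for every linear
functional `ℓ` with `ℓ (B j) ∈ (1/m)ℤ` and `ℓ (B j) ≥ -c` for all `j`, and every `Δ ∈ L`
with `‖Δ - b‖ < δ` (Euclidean norm): if `ℓ Δ ≤ 0` then `ℓ b ≤ 0`. -/
theorem stmt_2 (N r : ℕ) (hN : 0 < N) (hr : 0 < r)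
    (B : Fin r → EuclideanSpace ℝ (Fin N)) (b : EuclideanSpace ℝ (Fin N))
    (hb : b ∈ convexHull ℝ (Set.range B))
    (m : ℕ) (hm : 0 < m) (c : ℝ) (hc : 0 < c) :
    ∃ δ > (0 : ℝ), ∀ ℓ : EuclideanSpace ℝ (Fin N) →ₗ[ℝ] ℝ,
      (∀ j, (∃ n : ℤ, ℓ (B j) = (n : ℝ) / m) ∧ -c ≤ ℓ (B j)) →
      ∀ Δ ∈ convexHull ℝ (Set.range B), ‖Δ - b‖ < δ →
      ℓ Δ ≤ 0 → ℓ b ≤ 0 := by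
  by_contra hcon
  push_neg at hcon
  choose ℓ hℓ Δ hΔmem hΔnear hΔle hbpos using fun n : ℕ =>
    hcon (1 / (n + 1)) (by positivity)
  choose s hsmem hsrep using fun n => rep_of_mem_hull B (hΔmem n)
  obtain ⟨sL, hsL, φ, hφ, hconv⟩ := (isCompact_stdSimplex ℝ (Fin r)).tendsto_subseq hsmem
  have hΔtend : Filter.Tendsto (fun n => Δ (φ n)) Filter.atTop (nhds b) := by
    rw [← tendsto_sub_nhds_zero_iff, tendsto_zero_iff_norm_tendsto_zero]
    refine squeeze_zero (fun n => norm_nonneg _)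
      (fun n => le_of_lt (lt_of_lt_of_le (hΔnear (φ n)) ?_))
      tendsto_one_div_add_atTop_nhds_zero_nat
    refine one_div_le_one_div_of_le (by positivity) ?_
    have : n ≤ φ n := hφ.le_apply
    push_cast
    exact_mod_cast add_le_add_left (Nat.cast_le.mpr this) 1
  have hf : Continuous fun w : Fin r → ℝ => ∑ j, w j • B j :=
    continuous_finset_sum _ fun j _ => (continuous_apply j).smul continuous_const
  have hbrep : ∑ j, sL j • B j = b := by
    have h1 : Filter.Tendsto (fun n => ∑ j, (s (φ n)) j • B j) Filter.atTop
        (nhds (∑ j, sL j • B j)) := (hf.tendsto sL).comp hconv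
    have h2 : (fun n => ∑ j, (s (φ n)) j • B j) = fun n => Δ (φ n) :=
      funext fun n => hsrep (φ n)
    rw [h2] at h1
    exact tendsto_nhds_unique h1 hΔtend
  obtain ⟨ε, hε0, hε1, hεbound⟩ := lattice_lower_bound hm hc sL hsL
  have heval : ∀ (L : EuclideanSpace ℝ (Fin N) →ₗ[ℝ] ℝ) (w : Fin r → ℝ),
      L (∑ j, w j • B j) = ∑ j, w j * L (B j) := by
    intro L w
    rw [map_sum]
    simp [smul_eq_mul]
  -- σ : minimum positive coordinate of sL
  have hS : (Finset.univ.filter fun j => 0 < sL j).Nonempty := by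
    by_contra h
    rw [Finset.not_nonempty_iff_eq_empty, Finset.filter_eq_empty_iff] at h
    have : ∑ j, sL j = 0 := Finset.sum_eq_zero fun j _ =>
      le_antisymm (not_lt.mp (h (Finset.mem_univ j))) (hsL.1 j)
    rw [hsL.2] at this; norm_num at this
  set σ := (Finset.univ.filter fun j => 0 < sL j).inf' hS sL with hσdef
  have hσ : 0 < σ := by
    rw [hσdef, Finset.lt_inf'_iff]
    intro j hj
    exact (Finset.mem_filter.mp hj).2
  set Q := max c (2 * c / σ) with hQdef
  have hQ0 : 0 < Q := lt_of_lt_of_le hc (le_max_left _ _)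
  set η := min (σ / 2) (ε / (2 * (r * Q + 1))) with hηdef
  have hη0 : 0 < η := by
    apply lt_min (by positivity)
    have : (0:ℝ) ≤ (r : ℝ) * Q := by positivity
    positivity
  obtain ⟨n₀, hn₀⟩ := Metric.tendsto_atTop.mp hconv η hη0
  have hd : dist (s (φ n₀)) sL < η := hn₀ n₀ le_rfl
  have hcoord : ∀ j, |s (φ n₀) j - sL j| ≤ η := by
    intro j
    have h1 : dist (s (φ n₀) j) (sL j) ≤ dist (s (φ n₀)) sL := dist_le_pi_dist _ _ j
    rw [Real.dist_eq] at h1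
    exact h1.trans hd.le
  have hLb : ℓ (φ n₀) b = ∑ j, sL j * ℓ (φ n₀) (B j) := by rw [← hbrep, heval]
  have hLD : ℓ (φ n₀) (Δ (φ n₀)) = ∑ j, s (φ n₀) j * ℓ (φ n₀) (B j) := by
    rw [← hsrep (φ n₀), heval]
  have hεLb : ε ≤ ℓ (φ n₀) b := by
    rw [hLb]
    exact hεbound _ (hℓ (φ n₀)) (hLb ▸ hbpos (φ n₀))
  have hkey : ∀ j, (sL j - s (φ n₀) j) * ℓ (φ n₀) (B j) ≤ η * Q := by
    intro j
    have habs : |sL j - s (φ n₀) j| ≤ η := by rw [abs_sub_comm]; exact hcoord j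
    have ha := (abs_le.mp habs).2
    rcases le_or_gt (ℓ (φ n₀) (B j)) 0 with hv | hv
    · have h1 : -c ≤ ℓ (φ n₀) (B j) := (hℓ (φ n₀) j).2
      calc (sL j - s (φ n₀) j) * ℓ (φ n₀) (B j)
          ≤ |(sL j - s (φ n₀) j) * ℓ (φ n₀) (B j)| := le_abs_self _
        _ = |sL j - s (φ n₀) j| * |ℓ (φ n₀) (B j)| := abs_mul _ _
        _ ≤ η * c := mul_le_mul habs (abs_le.mpr ⟨h1, hv.trans hc.le⟩)
            (abs_nonneg _) hη0.le
        _ ≤ η * Q := mul_le_mul_of_nonneg_left (le_max_left _ _) hη0.le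
    · rcases eq_or_lt_of_le (hsL.1 j) with hsj | hsj
      · have hw0 : 0 ≤ s (φ n₀) j := (hsmem (φ n₀)).1 j
        have : (sL j - s (φ n₀) j) * ℓ (φ n₀) (B j) ≤ 0 := by nlinarith
        linarith [mul_nonneg hη0.le hQ0.le]
      · have hσj : σ ≤ sL j :=
          Finset.inf'_le _ (Finset.mem_filter.mpr ⟨Finset.mem_univ j, hsj⟩)
        have hησ : η ≤ σ / 2 := min_le_left _ _
        have hwj : σ / 2 ≤ s (φ n₀) j := by
          have := (abs_le.mp habs).1
          linarith
        have hsum : ∑ k, s (φ n₀) k * ℓ (φ n₀) (B k) ≤ 0 := hLD ▸ hΔle (φ n₀)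
        have hsplit : s (φ n₀) j * ℓ (φ n₀) (B j)
            + ∑ k ∈ Finset.univ.erase j, s (φ n₀) k * ℓ (φ n₀) (B k)
            = ∑ k, s (φ n₀) k * ℓ (φ n₀) (B k) :=
          Finset.add_sum_erase _ (fun k => s (φ n₀) k * ℓ (φ n₀) (B k)) (Finset.mem_univ j)
        have herase : -c ≤ ∑ k ∈ Finset.univ.erase j, s (φ n₀) k * ℓ (φ n₀) (B k) := by
          have step : ∀ k ∈ Finset.univ.erase j,
              s (φ n₀) k * (-c) ≤ s (φ n₀) k * ℓ (φ n₀) (B k) := fun k _ =>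
            mul_le_mul_of_nonneg_left (hℓ (φ n₀) k).2 ((hsmem (φ n₀)).1 k)
          have h5 := Finset.sum_le_sum step
          have h6 : ∑ k ∈ Finset.univ.erase j, s (φ n₀) k * (-c)
              = (∑ k ∈ Finset.univ.erase j, s (φ n₀) k) * (-c) := by
            rw [Finset.sum_mul]
          have h7 : ∑ k ∈ Finset.univ.erase j, s (φ n₀) k ≤ 1 := by
            rw [← (hsmem (φ n₀)).2]
            exact Finset.sum_le_sum_of_subset_of_nonneg (Finset.subset_univ _)
              fun k _ _ => (hsmem (φ n₀)).1 k
          have h8 : 0 ≤ ∑ k ∈ Finset.univ.erase j, s (φ n₀) k :=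
            Finset.sum_nonneg fun k _ => (hsmem (φ n₀)).1 k
          nlinarith
        have hwv : s (φ n₀) j * ℓ (φ n₀) (B j) ≤ c := by linarith
        have hv2 : ℓ (φ n₀) (B j) ≤ 2 * c / σ := by
          rw [le_div_iff₀ hσ]
          nlinarith
        calc (sL j - s (φ n₀) j) * ℓ (φ n₀) (B j)
            ≤ η * ℓ (φ n₀) (B j) := mul_le_mul_of_nonneg_right ha hv.le
          _ ≤ η * (2 * c / σ) := mul_le_mul_of_nonneg_left hv2 hη0.le
          _ ≤ η * Q := mul_le_mul_of_nonneg_left (le_max_right _ _) hη0.le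
  have hsumkey : ∑ j, (sL j - s (φ n₀) j) * ℓ (φ n₀) (B j) ≤ r * (η * Q) := by
    calc ∑ j, (sL j - s (φ n₀) j) * ℓ (φ n₀) (B j)
        ≤ ∑ _j : Fin r, η * Q := Finset.sum_le_sum fun j _ => hkey j
      _ = r * (η * Q) := by
        rw [Finset.sum_const, Finset.card_univ, Fintype.card_fin, nsmul_eq_mul]
  have hdiff : ℓ (φ n₀) b - ℓ (φ n₀) (Δ (φ n₀))
      = ∑ j, (sL j - s (φ n₀) j) * ℓ (φ n₀) (B j) := by
    rw [hLb, hLD, ← Finset.sum_sub_distrib]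
    exact Finset.sum_congr rfl fun j _ => (sub_mul _ _ _).symm
  have hη2 : η * (2 * ((r : ℝ) * Q + 1)) ≤ ε := by
    have hd0 : (0:ℝ) < 2 * ((r : ℝ) * Q + 1) := by
      have : (0:ℝ) ≤ (r : ℝ) * Q := by positivity
      positivity
    have := min_le_right (σ / 2) (ε / (2 * (r * Q + 1)))
    rw [← hηdef] at this
    calc η * (2 * ((r : ℝ) * Q + 1)) ≤ ε / (2 * (r * Q + 1)) * (2 * ((r : ℝ) * Q + 1)) :=
          mul_le_mul_of_nonneg_right this hd0.le
      _ = ε := by field_simp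
  have hrQ : (r : ℝ) * (η * Q) < ε := by
    have h1 : (0:ℝ) ≤ (r : ℝ) * Q := by positivity
    nlinarith
  have hfin := hΔle (φ n₀)
  linarith
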